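/- Let n ≥ 1, let f : ℝ → ℝⁿ → ℝⁿ be continuous with ‖f t x‖ ≤ C for all t ∈ [0,1] and all x ∈ ℝⁿ, let 0 < T ≤ 1, and let c : [0,T) → ℝⁿ satisfy c′(t) = f t (c(t)) for all t ∈ [0,T). Then c extends to a curve c̄ : [0,T] → ℝⁿ that is differentiable on [0,T] and satisfies c̄′(t) = f t (c̄(t)) for all t ∈ [0,T], with derivative at T taken within [0,T]. (This is the extension-theorem step used in the proof of the main theorem: a bounded solution of an ODE with uniformly bounded right-hand side extends to the closed interval, including satisfying the ODE at the endpoint.) -/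

import Mathlib

open Set MeasureTheory Filter Topology

/-- Extension-theorem step: a solution on `[0,T)` of an ODE whose right-hand side is
continuous and uniformly bounded on `[0,1] × ℝⁿ` extends to a solution on the closed
interval `[0,T]`, satisfying the ODE there (derivative within `[0,T]`, one-sided at
the endpoint `T`). -/
theorem ode_solution_extends_to_closed
    (n : ℕ) (hn : 1 ≤ n)
    (f : ℝ → EuclideanSpace ℝ (Fin n) → EuclideanSpace ℝ (Fin n))
    (hf_cont : Continuous fun p : ℝ × EuclideanSpace ℝ (Fin n) => f p.1 p.2)
    (C : ℝ)
    (hf_bdd : ∀ t ∈ Set.Icc (0 : ℝ) 1, ∀ x, ‖f t x‖ ≤ C)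
    (T : ℝ) (hT0 : 0 < T) (hT1 : T ≤ 1)
    (c : ℝ → EuclideanSpace ℝ (Fin n))
    (hc : ∀ t ∈ Set.Ico (0 : ℝ) T, HasDerivWithinAt c (f t (c t)) (Set.Ico (0 : ℝ) T) t) :
    ∃ cbar : ℝ → EuclideanSpace ℝ (Fin n),
      Set.EqOn cbar c (Set.Ico (0 : ℝ) T) ∧
      ∀ t ∈ Set.Icc (0 : ℝ) T,
        HasDerivWithinAt cbar (f t (cbar t)) (Set.Icc (0 : ℝ) T) t := by
  set g0 : ℝ → EuclideanSpace ℝ (Fin n) := fun s => f s (c s) with hg0def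
  have hc_cont : ContinuousOn c (Ico 0 T) := fun t ht => (hc t ht).continuousWithinAt
  have hg0_cont : ContinuousOn g0 (Ico 0 T) :=
    hf_cont.comp_continuousOn (f := fun s => (s, c s)) (continuousOn_id.prodMk hc_cont)
  have hbdd : ∀ s ∈ Icc (0 : ℝ) T, ‖g0 s‖ ≤ C := fun s hs =>
    hf_bdd s ⟨hs.1, hs.2.trans hT1⟩ _
  -- integrability of g0 on (0, T]
  have hg0m : AEStronglyMeasurable g0 (volume.restrict (Ico 0 T)) :=
    hg0_cont.aestronglyMeasurable measurableSet_Ico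
  have hintT : IntegrableOn g0 (Ioc 0 T) := by
    rw [integrableOn_Ioc_iff_integrableOn_Ioo]
    refine Integrable.mono' (g := fun _ => C)
      (integrableOn_const measure_Ioo_lt_top.ne)
      (hg0m.mono_measure (Measure.restrict_mono Ioo_subset_Ico_self le_rfl)) ?_
    exact (ae_restrict_iff' measurableSet_Ioo).2
      (ae_of_all _ fun s hs => hbdd s ⟨hs.1.le, hs.2.le⟩)
  have hint : ∀ u ∈ Icc (0 : ℝ) T, IntervalIntegrable g0 volume 0 u := fun u hu =>
    (intervalIntegrable_iff_integrableOn_Ioc_of_le hu.1).2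
      (hintT.mono_set (Ioc_subset_Ioc le_rfl hu.2))
  -- the primitive agrees with c on [0, T)
  have hFc : ∀ b ∈ Ico (0 : ℝ) T, c 0 + (∫ s in (0:ℝ)..b, g0 s) = c b := by
    intro b hb
    have key : (∫ s in (0:ℝ)..b, g0 s) = c b - c 0 := by
      refine intervalIntegral.integral_eq_sub_of_hasDeriv_right_of_le hb.1
        (hc_cont.mono fun x hx => ⟨hx.1, lt_of_le_of_lt hx.2 hb.2⟩) ?_
        (hint b ⟨hb.1, hb.2.le⟩)
      intro x hx
      have hx' : x ∈ Ico (0:ℝ) T := ⟨hx.1.le, hx.2.trans hb.2⟩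
      refine (hc x hx').mono_of_mem_nhdsWithin ?_
      rw [mem_nhdsWithin]
      exact ⟨Iio T, isOpen_Iio, hx'.2, fun y hy => ⟨hx.1.le.trans (le_of_lt hy.2), hy.1⟩⟩
    rw [key]; abel
  set L : EuclideanSpace ℝ (Fin n) := c 0 + ∫ s in (0:ℝ)..T, g0 s with hLdef
  -- c tends to L at T from the left
  have hnorm : ∀ u ∈ Ico (0 : ℝ) T, ‖c u - L‖ ≤ C * (T - u) := by
    intro u hu
    have hsplit : (∫ s in (0:ℝ)..u, g0 s) + (∫ s in u..T, g0 s) = ∫ s in (0:ℝ)..T, g0 s :=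
      intervalIntegral.integral_add_adjacent_intervals (hint u ⟨hu.1, hu.2.le⟩)
        ((intervalIntegrable_iff_integrableOn_Ioc_of_le hu.2.le).2
          (hintT.mono_set (Ioc_subset_Ioc hu.1 le_rfl)))
    have h1 : c u - L = -(∫ s in u..T, g0 s) := by
      rw [← hFc u hu, hLdef, ← hsplit]; abel
    rw [h1, norm_neg]
    have := intervalIntegral.norm_integral_le_of_norm_le_const
      (C := C) (a := u) (b := T) (f := g0) ?_
    · rwa [abs_of_nonneg (sub_nonneg.2 hu.2.le)] at this
    · intro x hx
      rw [Set.uIoc_of_le hu.2.le] at hx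
      exact hbdd x ⟨hu.1.trans hx.1.le, hx.2⟩
  have hLlim : Tendsto c (𝓝[Ico (0:ℝ) T] T) (𝓝 L) := by
    rw [← tendsto_sub_nhds_zero_iff]
    have hC0 : Tendsto (fun u : ℝ => C * (T - u)) (𝓝[Ico (0:ℝ) T] T) (𝓝 0) := by
      have h0 : Tendsto (fun u : ℝ => C * (T - u)) (𝓝 T) (𝓝 (C * (T - T))) :=
        (tendsto_const_nhds.mul (tendsto_const_nhds.sub tendsto_id))
      simpa using h0.mono_left nhdsWithin_le_nhds
    refine squeeze_zero_norm' ?_ hC0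
    filter_upwards [self_mem_nhdsWithin] with u hu using hnorm u hu
  -- the extension
  set cbar : ℝ → EuclideanSpace ℝ (Fin n) := fun t => if t < T then c t else L with hcbardef
  have hEqOn : Set.EqOn cbar c (Ico 0 T) := fun t ht => if_pos ht.2
  have hcbarT : cbar T = L := if_neg (lt_irrefl T)
  set g' : ℝ → EuclideanSpace ℝ (Fin n) := fun s => f s (cbar s) with hg'def
  have hg'g0 : ∀ s, s < T → g' s = g0 s := fun s hs => by
    simp only [hg'def, hcbardef, if_pos hs, hg0def]
  -- ae equality on (0, T]
  have hIio : Iio T ∈ ae (volume.restrict (Ioc (0:ℝ) T)) := by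
    rw [mem_ae_iff, Measure.restrict_apply measurableSet_Iio.compl]
    refine measure_mono_null ?_ (measure_singleton T)
    rintro x ⟨hx1, hx2⟩
    simp only [Set.compl_Iio, Set.mem_Ici] at hx1
    exact Set.mem_singleton_iff.2 (le_antisymm hx2.2 hx1)
  have hae : g0 =ᵐ[volume.restrict (Ioc 0 T)] g' :=
    Filter.eventuallyEq_of_mem hIio fun s hs => (hg'g0 s hs).symm
  have hint'T : IntegrableOn g' (Ioc 0 T) := hintT.congr hae
  have hint' : IntervalIntegrable g' volume 0 T :=
    (intervalIntegrable_iff_integrableOn_Ioc_of_le hT0.le).2 hint'T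
  have hg'm : AEStronglyMeasurable g' (volume.restrict (Icc 0 T)) := by
    rw [← Measure.restrict_congr_set Ioc_ae_eq_Icc]
    exact hint'T.aestronglyMeasurable
  -- continuity of g' within Iic T at T
  have hIccmem : Icc (0:ℝ) T ∈ 𝓝[Iic T] T := by
    rw [mem_nhdsWithin]
    exact ⟨Ioi 0, isOpen_Ioi, hT0, fun y hy => ⟨hy.1.le, hy.2⟩⟩
  have hcwa : ContinuousWithinAt g' (Iic T) T := by
    have hsplit : Iic T = Iio T ∪ {T} := Iio_union_right.symm
    have hten : Tendsto g' (𝓝[Ico (0:ℝ) T] T) (𝓝 (g' T)) := by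
      have hpair : Tendsto (fun s => (s, c s)) (𝓝[Ico (0:ℝ) T] T) (𝓝 (T, L)) :=
        (tendsto_id.mono_left nhdsWithin_le_nhds).prodMk_nhds hLlim
      have := (hf_cont.continuousAt (x := (T, L))).tendsto.comp hpair
      have hval : g' T = f T L := by show f T (cbar T) = f T L; rw [hcbarT]
      rw [hval]
      refine this.congr' ?_
      filter_upwards [self_mem_nhdsWithin] with s hs
      simp [hg'g0 s hs.2, hg0def, Function.comp]
    unfold ContinuousWithinAt
    rw [hsplit, nhdsWithin_union]
    refine Tendsto.sup ?_ ?_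
    · have heq : 𝓝[Iio T] T = 𝓝[Ioi 0 ∩ Iio T] T :=
        (nhdsWithin_inter_of_mem (mem_nhdsWithin_of_mem_nhds (Ioi_mem_nhds hT0))).symm
      rw [heq]
      exact hten.mono_left (nhdsWithin_mono _ fun y hy => ⟨hy.1.le, hy.2⟩)
    · rw [nhdsWithin_singleton]
      exact tendsto_pure_nhds g' T
  have hmeas : StronglyMeasurableAtFilter g' (𝓝[Iic T] T) volume :=
    ⟨Icc 0 T, hIccmem, hg'm⟩
  have hderivT : HasDerivWithinAt (fun u => ∫ s in (0:ℝ)..u, g' s) (g' T) (Iic T) T :=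
    intervalIntegral.integral_hasDerivWithinAt_right hint' hmeas hcwa
  -- identify the primitive of g' with cbar on [0, T]
  have hprim : ∀ u ∈ Icc (0:ℝ) T, cbar u = c 0 + ∫ s in (0:ℝ)..u, g' s := by
    intro u hu
    have hcongr : (∫ s in (0:ℝ)..u, g' s) = ∫ s in (0:ℝ)..u, g0 s := by
      refine intervalIntegral.integral_congr_ae ?_
      have hone : ∀ᵐ s : ℝ, s ≠ T := by
        rw [ae_iff]
        refine measure_mono_null (fun x hx => ?_) (measure_singleton T)
        simpa using not_not.1 hx
      filter_upwards [hone] with s hs hmem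
      rw [Set.uIoc_of_le hu.1] at hmem
      exact hg'g0 s (lt_of_le_of_ne (hmem.2.trans hu.2) hs)
    rw [hcongr]
    rcases lt_or_eq_of_le hu.2 with h | h
    · rw [hEqOn ⟨hu.1, h⟩, hFc u ⟨hu.1, h⟩]
    · rw [h, hcbarT, hLdef]
  -- conclude
  refine ⟨cbar, hEqOn, fun t ht => ?_⟩
  rcases lt_or_eq_of_le ht.2 with hlt | heq
  · -- interior / left part: transfer derivative of c
    have hmem : Ico (0:ℝ) T ∈ 𝓝[Icc (0:ℝ) T] t := by
      rw [mem_nhdsWithin]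
      exact ⟨Iio T, isOpen_Iio, hlt, fun y hy => ⟨hy.2.1, hy.1⟩⟩
    have hder : HasDerivWithinAt c (f t (c t)) (Icc (0:ℝ) T) t :=
      (hc t ⟨ht.1, hlt⟩).mono_of_mem_nhdsWithin hmem
    have hev : cbar =ᶠ[𝓝[Icc (0:ℝ) T] t] c := by
      filter_upwards [hmem] with y hy using hEqOn hy
    have := hder.congr_of_eventuallyEq hev (hEqOn ⟨ht.1, hlt⟩)
    rwa [← hEqOn ⟨ht.1, hlt⟩] at this
  · -- endpoint T
    subst heq
    have h1 : HasDerivWithinAt (fun u => c 0 + ∫ s in (0:ℝ)..u, g' s) (g' t)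
        (Icc (0:ℝ) t) t :=
      ((hderivT.mono Icc_subset_Iic_self).const_add (c 0))
    exact h1.congr (fun u hu => hprim u hu) (hprim t ⟨hT0.le, le_rfl⟩)
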